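/- Fix a > 0 and define on the half-plane {(ρ,z) : ρ > 0} the function u = log(r_a − (z − a)) + log(r_{−a} + (z + a)), where r_{±a} = √(ρ² + (z ∓ a)²). Then the diagonal matrix field F_ring = diag(e^u, 1) satisfies the static harmonic map equation ∂²F/∂ρ² + (1/ρ)∂F/∂ρ + ∂²F/∂z² = (∂F/∂ρ) F⁻¹ (∂F/∂ρ) + (∂F/∂z) F⁻¹ (∂F/∂z) at every point with ρ > 0. -/

import Mathlib

open Matrix

/-- `u(ρ,z) = log(r_a − (z − a)) + log(r_{−a} + (z + a))` with `r_{±a} = √(ρ² + (z ∓ a)²)`. -/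
noncomputable def uRing (a ρ z : ℝ) : ℝ :=
  Real.log (Real.sqrt (ρ ^ 2 + (z - a) ^ 2) - (z - a)) +
    Real.log (Real.sqrt (ρ ^ 2 + (z + a) ^ 2) + (z + a))

/-- The static black ring matrix `F_ring = diag(e^u, 1)`. -/
noncomputable def FRing (a ρ z : ℝ) : Matrix (Fin 2) (Fin 2) ℝ :=
  Matrix.diagonal ![Real.exp (uRing a ρ z), 1]

/-- Entrywise partial derivative in `ρ` of a matrix-valued function of `(ρ, z)`. -/
noncomputable def pdRhoM (F : ℝ → ℝ → Matrix (Fin 2) (Fin 2) ℝ) (ρ z : ℝ) :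
    Matrix (Fin 2) (Fin 2) ℝ :=
  Matrix.of fun i j => deriv (fun ρ' => F ρ' z i j) ρ

/-- Entrywise partial derivative in `z` of a matrix-valued function of `(ρ, z)`. -/
noncomputable def pdZM (F : ℝ → ℝ → Matrix (Fin 2) (Fin 2) ℝ) (ρ z : ℝ) :
    Matrix (Fin 2) (Fin 2) ℝ :=
  Matrix.of fun i j => deriv (fun z' => F ρ z' i j) z


lemma sqrt_sq' {ρ w : ℝ} : (Real.sqrt (ρ ^ 2 + w ^ 2)) ^ 2 = ρ ^ 2 + w ^ 2 :=
  Real.sq_sqrt (by positivity)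

lemma sqrt_pos' {ρ : ℝ} (hρ : ρ ≠ 0) (w : ℝ) : 0 < Real.sqrt (ρ ^ 2 + w ^ 2) :=
  Real.sqrt_pos.2 (by positivity)

lemma lt_sqrt' {ρ : ℝ} (hρ : ρ ≠ 0) (w : ℝ) : w < Real.sqrt (ρ ^ 2 + w ^ 2) := by
  have h2 : 0 < ρ ^ 2 := by positivity
  nlinarith [sqrt_sq' (ρ := ρ) (w := w), Real.sqrt_nonneg (ρ ^ 2 + w ^ 2)]

lemma neg_lt_sqrt' {ρ : ℝ} (hρ : ρ ≠ 0) (w : ℝ) : -Real.sqrt (ρ ^ 2 + w ^ 2) < w := by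
  have h := lt_sqrt' hρ (-w)
  rw [neg_sq] at h
  linarith

lemma hasDerivAt_sqrt_rho {ρ : ℝ} (hρ : ρ ≠ 0) (w : ℝ) :
    HasDerivAt (fun ρ' => Real.sqrt (ρ' ^ 2 + w ^ 2)) (ρ / Real.sqrt (ρ ^ 2 + w ^ 2)) ρ := by
  have h : HasDerivAt (fun ρ' : ℝ => ρ' ^ 2 + w ^ 2) (2 * ρ) ρ := by
    simpa using (hasDerivAt_pow 2 ρ).add_const (w ^ 2)
  have := (Real.hasDerivAt_sqrt (by positivity : ρ ^ 2 + w ^ 2 ≠ 0)).comp ρ h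
  refine this.congr_deriv ?_
  have h0 := (sqrt_pos' hρ w).ne'
  field_simp

lemma hasDerivAt_sqrt_z {ρ : ℝ} (hρ : ρ ≠ 0) (c z : ℝ) :
    HasDerivAt (fun z' => Real.sqrt (ρ ^ 2 + (z' - c) ^ 2))
      ((z - c) / Real.sqrt (ρ ^ 2 + (z - c) ^ 2)) z := by
  have h : HasDerivAt (fun z' : ℝ => ρ ^ 2 + (z' - c) ^ 2) (2 * (z - c)) z := by
    have := (((hasDerivAt_id z).sub_const c).pow 2).const_add (ρ ^ 2)
    simpa using this
  have := (Real.hasDerivAt_sqrt (by positivity : ρ ^ 2 + (z - c) ^ 2 ≠ 0)).comp z h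
  refine this.congr_deriv ?_
  have h0 := (sqrt_pos' hρ (z - c)).ne'
  field_simp

lemma hasDerivAt_sqrt_z' {ρ : ℝ} (hρ : ρ ≠ 0) (c z : ℝ) :
    HasDerivAt (fun z' => Real.sqrt (ρ ^ 2 + (z' + c) ^ 2))
      ((z + c) / Real.sqrt (ρ ^ 2 + (z + c) ^ 2)) z := by
  have := hasDerivAt_sqrt_z hρ (-c) z
  simpa [sub_neg_eq_add] using this

-- first derivatives of the log terms in ρ
lemma hasDerivAt_logm_rho {ρ : ℝ} (hρ : ρ ≠ 0) (w : ℝ) :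
    HasDerivAt (fun ρ' => Real.log (Real.sqrt (ρ' ^ 2 + w ^ 2) - w))
      (ρ / (Real.sqrt (ρ ^ 2 + w ^ 2) * (Real.sqrt (ρ ^ 2 + w ^ 2) - w))) ρ := by
  have hs := (hasDerivAt_sqrt_rho hρ w).sub_const w
  have hne : Real.sqrt (ρ ^ 2 + w ^ 2) - w ≠ 0 := by have := lt_sqrt' hρ w; linarith
  have := hs.log hne
  convert this using 1
  have h0 := (sqrt_pos' hρ w).ne'
  field_simp

lemma hasDerivAt_logp_rho {ρ : ℝ} (hρ : ρ ≠ 0) (w : ℝ) :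
    HasDerivAt (fun ρ' => Real.log (Real.sqrt (ρ' ^ 2 + w ^ 2) + w))
      (ρ / (Real.sqrt (ρ ^ 2 + w ^ 2) * (Real.sqrt (ρ ^ 2 + w ^ 2) + w))) ρ := by
  have hs := (hasDerivAt_sqrt_rho hρ w).add_const w
  have hne : Real.sqrt (ρ ^ 2 + w ^ 2) + w ≠ 0 := by have := neg_lt_sqrt' hρ w; linarith
  have := hs.log hne
  convert this using 1
  have h0 := (sqrt_pos' hρ w).ne'
  field_simp

-- first derivatives of the log terms in z
lemma hasDerivAt_logm_z {ρ : ℝ} (hρ : ρ ≠ 0) (c z : ℝ) :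
    HasDerivAt (fun z' => Real.log (Real.sqrt (ρ ^ 2 + (z' - c) ^ 2) - (z' - c)))
      (-(1 / Real.sqrt (ρ ^ 2 + (z - c) ^ 2))) z := by
  have hs := (hasDerivAt_sqrt_z hρ c z).sub ((hasDerivAt_id z).sub_const c)
  have hne : Real.sqrt (ρ ^ 2 + (z - c) ^ 2) - (z - c) ≠ 0 := by
    have := lt_sqrt' hρ (z - c); linarith
  have := hs.log hne
  refine this.congr_deriv ?_
  simp only [Pi.sub_apply, Pi.add_apply, Pi.mul_apply, id]
  have h0 := (sqrt_pos' hρ (z - c)).ne'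
  field_simp
  ring

lemma hasDerivAt_logp_z {ρ : ℝ} (hρ : ρ ≠ 0) (c z : ℝ) :
    HasDerivAt (fun z' => Real.log (Real.sqrt (ρ ^ 2 + (z' + c) ^ 2) + (z' + c)))
      (1 / Real.sqrt (ρ ^ 2 + (z + c) ^ 2)) z := by
  have hs := (hasDerivAt_sqrt_z' hρ c z).add ((hasDerivAt_id z).add_const c)
  have hne : Real.sqrt (ρ ^ 2 + (z + c) ^ 2) + (z + c) ≠ 0 := by
    have := neg_lt_sqrt' hρ (z + c); linarith
  have := hs.log hne
  refine this.congr_deriv ?_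
  simp only [Pi.sub_apply, Pi.add_apply, Pi.mul_apply, id]
  have h0 := (sqrt_pos' hρ (z + c)).ne'
  field_simp
  ring

-- second derivatives in ρ of the first-derivative terms
lemma hasDerivAt_termm_rho {ρ : ℝ} (hρ : ρ ≠ 0) (w : ℝ) :
    HasDerivAt (fun ρ' => ρ' / (Real.sqrt (ρ' ^ 2 + w ^ 2) * (Real.sqrt (ρ' ^ 2 + w ^ 2) - w)))
      ((Real.sqrt (ρ ^ 2 + w ^ 2) ^ 2 * (Real.sqrt (ρ ^ 2 + w ^ 2) - w)
          - ρ ^ 2 * (2 * Real.sqrt (ρ ^ 2 + w ^ 2) - w))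
        / (Real.sqrt (ρ ^ 2 + w ^ 2) ^ 3 * (Real.sqrt (ρ ^ 2 + w ^ 2) - w) ^ 2)) ρ := by
  have hs := hasDerivAt_sqrt_rho hρ w
  have h0 := (sqrt_pos' hρ w).ne'
  have hmw : Real.sqrt (ρ ^ 2 + w ^ 2) - w ≠ 0 := by have := lt_sqrt' hρ w; linarith
  have hden := hs.mul (hs.sub_const w)
  have := (hasDerivAt_id ρ).div hden (mul_ne_zero h0 hmw)
  refine this.congr_deriv ?_
  simp only [Pi.sub_apply, Pi.add_apply, Pi.mul_apply, id]
  set r := Real.sqrt (ρ ^ 2 + w ^ 2) with hrdef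
  have hr2 : r ^ 2 = ρ ^ 2 + w ^ 2 := sqrt_sq'
  have hρ2 : ρ ^ 2 = r ^ 2 - w ^ 2 := by linarith
  field_simp
  ring_nf

lemma hasDerivAt_termp_rho {ρ : ℝ} (hρ : ρ ≠ 0) (w : ℝ) :
    HasDerivAt (fun ρ' => ρ' / (Real.sqrt (ρ' ^ 2 + w ^ 2) * (Real.sqrt (ρ' ^ 2 + w ^ 2) + w)))
      ((Real.sqrt (ρ ^ 2 + w ^ 2) ^ 2 * (Real.sqrt (ρ ^ 2 + w ^ 2) + w)
          - ρ ^ 2 * (2 * Real.sqrt (ρ ^ 2 + w ^ 2) + w))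
        / (Real.sqrt (ρ ^ 2 + w ^ 2) ^ 3 * (Real.sqrt (ρ ^ 2 + w ^ 2) + w) ^ 2)) ρ := by
  have hs := hasDerivAt_sqrt_rho hρ w
  have h0 := (sqrt_pos' hρ w).ne'
  have hpw : Real.sqrt (ρ ^ 2 + w ^ 2) + w ≠ 0 := by have := neg_lt_sqrt' hρ w; linarith
  have hden := hs.mul (hs.add_const w)
  have := (hasDerivAt_id ρ).div hden (mul_ne_zero h0 hpw)
  refine this.congr_deriv ?_
  simp only [Pi.sub_apply, Pi.add_apply, Pi.mul_apply, id]
  set r := Real.sqrt (ρ ^ 2 + w ^ 2) with hrdef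
  have hr2 : r ^ 2 = ρ ^ 2 + w ^ 2 := sqrt_sq'
  have hρ2 : ρ ^ 2 = r ^ 2 - w ^ 2 := by linarith
  field_simp
  ring_nf

-- second derivatives in z of the first-derivative terms
lemma hasDerivAt_invsqrtm_z {ρ : ℝ} (hρ : ρ ≠ 0) (c z : ℝ) :
    HasDerivAt (fun z' => 1 / Real.sqrt (ρ ^ 2 + (z' - c) ^ 2))
      (-((z - c) / Real.sqrt (ρ ^ 2 + (z - c) ^ 2) ^ 3)) z := by
  have h0 := (sqrt_pos' hρ (z - c)).ne'
  have := (hasDerivAt_const z (1 : ℝ)).div (hasDerivAt_sqrt_z hρ c z) h0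
  refine this.congr_deriv ?_
  set r := Real.sqrt (ρ ^ 2 + (z - c) ^ 2) with hrdef
  field_simp
  ring

lemma hasDerivAt_invsqrtp_z {ρ : ℝ} (hρ : ρ ≠ 0) (c z : ℝ) :
    HasDerivAt (fun z' => 1 / Real.sqrt (ρ ^ 2 + (z' + c) ^ 2))
      (-((z + c) / Real.sqrt (ρ ^ 2 + (z + c) ^ 2) ^ 3)) z := by
  have h0 := (sqrt_pos' hρ (z + c)).ne'
  have := (hasDerivAt_const z (1 : ℝ)).div (hasDerivAt_sqrt_z' hρ c z) h0
  refine this.congr_deriv ?_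
  set r := Real.sqrt (ρ ^ 2 + (z + c) ^ 2) with hrdef
  field_simp
  ring


noncomputable def uRho (a ρ z : ℝ) : ℝ :=
  ρ / (Real.sqrt (ρ ^ 2 + (z - a) ^ 2) * (Real.sqrt (ρ ^ 2 + (z - a) ^ 2) - (z - a))) +
    ρ / (Real.sqrt (ρ ^ 2 + (z + a) ^ 2) * (Real.sqrt (ρ ^ 2 + (z + a) ^ 2) + (z + a)))

noncomputable def uZ (a ρ z : ℝ) : ℝ :=
  -(1 / Real.sqrt (ρ ^ 2 + (z - a) ^ 2)) + 1 / Real.sqrt (ρ ^ 2 + (z + a) ^ 2)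

noncomputable def uRhoRho (a ρ z : ℝ) : ℝ :=
  (Real.sqrt (ρ ^ 2 + (z - a) ^ 2) ^ 2 * (Real.sqrt (ρ ^ 2 + (z - a) ^ 2) - (z - a))
      - ρ ^ 2 * (2 * Real.sqrt (ρ ^ 2 + (z - a) ^ 2) - (z - a)))
    / (Real.sqrt (ρ ^ 2 + (z - a) ^ 2) ^ 3 * (Real.sqrt (ρ ^ 2 + (z - a) ^ 2) - (z - a)) ^ 2) +
  (Real.sqrt (ρ ^ 2 + (z + a) ^ 2) ^ 2 * (Real.sqrt (ρ ^ 2 + (z + a) ^ 2) + (z + a))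
      - ρ ^ 2 * (2 * Real.sqrt (ρ ^ 2 + (z + a) ^ 2) + (z + a)))
    / (Real.sqrt (ρ ^ 2 + (z + a) ^ 2) ^ 3 * (Real.sqrt (ρ ^ 2 + (z + a) ^ 2) + (z + a)) ^ 2)

noncomputable def uZZ (a ρ z : ℝ) : ℝ :=
  (z - a) / Real.sqrt (ρ ^ 2 + (z - a) ^ 2) ^ 3
    + -((z + a) / Real.sqrt (ρ ^ 2 + (z + a) ^ 2) ^ 3)

lemma hasDerivAt_uRing_rho {ρ : ℝ} (hρ : ρ ≠ 0) (a z : ℝ) :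
    HasDerivAt (fun ρ' => uRing a ρ' z) (uRho a ρ z) ρ := by
  unfold uRing uRho
  exact (hasDerivAt_logm_rho hρ (z - a)).add (hasDerivAt_logp_rho hρ (z + a))

lemma hasDerivAt_uRing_z {ρ : ℝ} (hρ : ρ ≠ 0) (a z : ℝ) :
    HasDerivAt (fun z' => uRing a ρ z') (uZ a ρ z) z := by
  unfold uRing uZ
  exact (hasDerivAt_logm_z hρ a z).add (hasDerivAt_logp_z hρ a z)

lemma hasDerivAt_uRho {ρ : ℝ} (hρ : ρ ≠ 0) (a z : ℝ) :
    HasDerivAt (fun ρ' => uRho a ρ' z) (uRhoRho a ρ z) ρ := by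
  unfold uRho uRhoRho
  exact (hasDerivAt_termm_rho hρ (z - a)).add (hasDerivAt_termp_rho hρ (z + a))

lemma hasDerivAt_uZ {ρ : ℝ} (hρ : ρ ≠ 0) (a z : ℝ) :
    HasDerivAt (fun z' => uZ a ρ z') (uZZ a ρ z) z := by
  unfold uZ uZZ
  have h1 := (hasDerivAt_invsqrtm_z hρ a z).neg
  have h2 := hasDerivAt_invsqrtp_z hρ a z
  have := h1.add h2
  refine this.congr_deriv ?_
  ring

-- per-term PDE identities
lemma keym {ρ : ℝ} (hρ : ρ ≠ 0) (w : ℝ) :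
    (Real.sqrt (ρ ^ 2 + w ^ 2) ^ 2 * (Real.sqrt (ρ ^ 2 + w ^ 2) - w)
        - ρ ^ 2 * (2 * Real.sqrt (ρ ^ 2 + w ^ 2) - w))
      / (Real.sqrt (ρ ^ 2 + w ^ 2) ^ 3 * (Real.sqrt (ρ ^ 2 + w ^ 2) - w) ^ 2)
    + (1 / ρ) * (ρ / (Real.sqrt (ρ ^ 2 + w ^ 2) * (Real.sqrt (ρ ^ 2 + w ^ 2) - w)))
    + w / Real.sqrt (ρ ^ 2 + w ^ 2) ^ 3 = 0 := by
  set r := Real.sqrt (ρ ^ 2 + w ^ 2) with hrdef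
  have hr0 : 0 < r := sqrt_pos' hρ w
  have hr2 : r ^ 2 = ρ ^ 2 + w ^ 2 := sqrt_sq'
  have hρ2 : ρ ^ 2 = r ^ 2 - w ^ 2 := by linarith
  have hmw : r - w ≠ 0 := by have := lt_sqrt' hρ w; rw [← hrdef] at this; intro h; linarith
  rw [hρ2]
  field_simp
  ring

lemma keyp {ρ : ℝ} (hρ : ρ ≠ 0) (w : ℝ) :
    (Real.sqrt (ρ ^ 2 + w ^ 2) ^ 2 * (Real.sqrt (ρ ^ 2 + w ^ 2) + w)
        - ρ ^ 2 * (2 * Real.sqrt (ρ ^ 2 + w ^ 2) + w))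
      / (Real.sqrt (ρ ^ 2 + w ^ 2) ^ 3 * (Real.sqrt (ρ ^ 2 + w ^ 2) + w) ^ 2)
    + (1 / ρ) * (ρ / (Real.sqrt (ρ ^ 2 + w ^ 2) * (Real.sqrt (ρ ^ 2 + w ^ 2) + w)))
    - w / Real.sqrt (ρ ^ 2 + w ^ 2) ^ 3 = 0 := by
  set r := Real.sqrt (ρ ^ 2 + w ^ 2) with hrdef
  have hr0 : 0 < r := sqrt_pos' hρ w
  have hr2 : r ^ 2 = ρ ^ 2 + w ^ 2 := sqrt_sq'
  have hρ2 : ρ ^ 2 = r ^ 2 - w ^ 2 := by linarith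
  have hpw : r + w ≠ 0 := by have := neg_lt_sqrt' hρ w; rw [← hrdef] at this; intro h; linarith
  rw [hρ2]
  field_simp
  ring

lemma uPDE {ρ : ℝ} (hρ : ρ ≠ 0) (a z : ℝ) :
    uRhoRho a ρ z + (1 / ρ) * uRho a ρ z + uZZ a ρ z = 0 := by
  unfold uRhoRho uRho uZZ
  linear_combination keym hρ (z - a) + keyp hρ (z + a)

lemma pdRhoM_FRing (a z : ℝ) {ρ : ℝ} (hρ : ρ ≠ 0) :
    pdRhoM (FRing a) ρ z
      = Matrix.diagonal ![Real.exp (uRing a ρ z) * uRho a ρ z, 0] := by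
  ext i j
  rw [pdRhoM, Matrix.of_apply]
  fin_cases i <;> fin_cases j <;>
    simp only [FRing, Matrix.diagonal, Matrix.of_apply, Matrix.cons_val', Matrix.cons_val_zero,
      Matrix.cons_val_one, Matrix.head_cons, Matrix.empty_val', Matrix.cons_val_fin_one,
      Fin.isValue, Fin.zero_eta, Fin.mk_one, if_true, if_false, Fin.one_eq_zero_iff,
      Fin.zero_eq_one_iff, Nat.succ_ne_self, ite_true, ite_false, Ne, not_false_iff]
  · exact ((hasDerivAt_uRing_rho hρ a z).exp).deriv
  · simp
  · simp
  · simp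

lemma pdZM_FRing (a z : ℝ) {ρ : ℝ} (hρ : ρ ≠ 0) :
    pdZM (FRing a) ρ z
      = Matrix.diagonal ![Real.exp (uRing a ρ z) * uZ a ρ z, 0] := by
  ext i j
  rw [pdZM, Matrix.of_apply]
  fin_cases i <;> fin_cases j <;>
    simp only [FRing, Matrix.diagonal, Matrix.of_apply, Matrix.cons_val', Matrix.cons_val_zero,
      Matrix.cons_val_one, Matrix.head_cons, Matrix.empty_val', Matrix.cons_val_fin_one,
      Fin.isValue, Fin.zero_eta, Fin.mk_one, if_true, if_false, Fin.one_eq_zero_iff,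
      Fin.zero_eq_one_iff, Nat.succ_ne_self, ite_true, ite_false, Ne, not_false_iff]
  · exact ((hasDerivAt_uRing_z hρ a z).exp).deriv
  · simp
  · simp
  · simp

lemma pdRhoM2_FRing (a z : ℝ) {ρ : ℝ} (hρ : 0 < ρ) :
    pdRhoM (pdRhoM (FRing a)) ρ z
      = Matrix.diagonal ![Real.exp (uRing a ρ z) * uRho a ρ z * uRho a ρ z
          + Real.exp (uRing a ρ z) * uRhoRho a ρ z, 0] := by
  ext i j
  rw [pdRhoM, Matrix.of_apply]
  fin_cases i <;> fin_cases j <;> simp only [Fin.zero_eta, Fin.mk_one]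
  · have hev : ∀ᶠ ρ' in nhds ρ, pdRhoM (FRing a) ρ' z 0 0
        = Real.exp (uRing a ρ' z) * uRho a ρ' z := by
      filter_upwards [Ioi_mem_nhds hρ] with ρ' hρ'
      rw [pdRhoM_FRing a z (ne_of_gt hρ')]
      simp
    have h00 : deriv (fun ρ' => pdRhoM (FRing a) ρ' z 0 0) ρ
        = deriv (fun ρ' => Real.exp (uRing a ρ' z) * uRho a ρ' z) ρ :=
      Filter.EventuallyEq.deriv_eq hev
    have hd : HasDerivAt (fun ρ' => Real.exp (uRing a ρ' z) * uRho a ρ' z)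
        (Real.exp (uRing a ρ z) * uRho a ρ z * uRho a ρ z
          + Real.exp (uRing a ρ z) * uRhoRho a ρ z) ρ :=
      ((hasDerivAt_uRing_rho (ne_of_gt hρ) a z).exp).mul (hasDerivAt_uRho (ne_of_gt hρ) a z)
    simpa using h00.trans hd.deriv
  · have : (fun ρ' => pdRhoM (FRing a) ρ' z 0 1) = fun _ => (0 : ℝ) := by
      funext ρ'; simp [pdRhoM, FRing]
    rw [this]
    simp
  · have : (fun ρ' => pdRhoM (FRing a) ρ' z 1 0) = fun _ => (0 : ℝ) := by
      funext ρ'; simp [pdRhoM, FRing]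
    rw [this]
    simp
  · have : (fun ρ' => pdRhoM (FRing a) ρ' z 1 1) = fun _ => (0 : ℝ) := by
      funext ρ'; simp [pdRhoM, FRing]
    rw [this]
    simp

lemma pdZM2_FRing (a z : ℝ) {ρ : ℝ} (hρ : ρ ≠ 0) :
    pdZM (pdZM (FRing a)) ρ z
      = Matrix.diagonal ![Real.exp (uRing a ρ z) * uZ a ρ z * uZ a ρ z
          + Real.exp (uRing a ρ z) * uZZ a ρ z, 0] := by
  ext i j
  rw [pdZM, Matrix.of_apply]
  fin_cases i <;> fin_cases j <;> simp only [Fin.zero_eta, Fin.mk_one]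
  · have hfun : (fun z' => pdZM (FRing a) ρ z' 0 0)
        = fun z' => Real.exp (uRing a ρ z') * uZ a ρ z' := by
      funext z'
      rw [pdZM_FRing a z' hρ]
      simp
    rw [hfun]
    have hd : HasDerivAt (fun z' => Real.exp (uRing a ρ z') * uZ a ρ z')
        (Real.exp (uRing a ρ z) * uZ a ρ z * uZ a ρ z
          + Real.exp (uRing a ρ z) * uZZ a ρ z) z :=
      ((hasDerivAt_uRing_z hρ a z).exp).mul (hasDerivAt_uZ hρ a z)
    simpa using hd.deriv
  · have : (fun z' => pdZM (FRing a) ρ z' 0 1) = fun _ => (0 : ℝ) := by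
      funext z'; simp [pdZM, FRing]
    rw [this]
    simp
  · have : (fun z' => pdZM (FRing a) ρ z' 1 0) = fun _ => (0 : ℝ) := by
      funext z'; simp [pdZM, FRing]
    rw [this]
    simp
  · have : (fun z' => pdZM (FRing a) ρ z' 1 1) = fun _ => (0 : ℝ) := by
      funext z'; simp [pdZM, FRing]
    rw [this]
    simp

lemma FRing_inv (a ρ z : ℝ) :
    (FRing a ρ z)⁻¹ = Matrix.diagonal ![Real.exp (-uRing a ρ z), 1] := by
  apply Matrix.inv_eq_right_inv
  rw [FRing, Matrix.diagonal_mul_diagonal]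
  ext i j
  fin_cases i <;> fin_cases j <;>
    simp [Matrix.one_apply, ← Real.exp_add]

theorem stmt_7 (a : ℝ) (ha : 0 < a) (ρ z : ℝ) (hρ : 0 < ρ) :
    pdRhoM (pdRhoM (FRing a)) ρ z + (1 / ρ) • pdRhoM (FRing a) ρ z
        + pdZM (pdZM (FRing a)) ρ z =
      pdRhoM (FRing a) ρ z * (FRing a ρ z)⁻¹ * pdRhoM (FRing a) ρ z
        + pdZM (FRing a) ρ z * (FRing a ρ z)⁻¹ * pdZM (FRing a) ρ z := by
  have hρ0 : ρ ≠ 0 := ne_of_gt hρ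
  rw [pdRhoM2_FRing a z hρ, pdZM2_FRing a z hρ0, pdRhoM_FRing a z hρ0, pdZM_FRing a z hρ0,
    FRing_inv]
  have hPDE := uPDE hρ0 a z
  have hE : Real.exp (uRing a ρ z) * Real.exp (-uRing a ρ z) = 1 := by
    rw [← Real.exp_add]; simp
  ext i j
  fin_cases i <;> fin_cases j <;>
    simp [Matrix.mul_apply, Fin.sum_univ_two, Matrix.diagonal, Matrix.smul_apply,
      Matrix.one_apply]
  · linear_combination Real.exp (uRing a ρ z) * hPDE
      - Real.exp (uRing a ρ z) * (uRho a ρ z ^ 2 + uZ a ρ z ^ 2) * hE
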